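/- Let Γ be the product cocycle generated by γ over a rotation, satisfying ‖Γ^m‖ ≤ C₀ ξ^m for all m ≥ 0 with ξ < 1 and C₀ ≥ 1. If γ̃ is another cocycle with ‖γ − γ̃‖ ≤ ε* for ε* sufficiently small (depending only on C₀, ξ, and sup-norms of γ), then there exist constants C̃₀ and ξ̃ < 1 such that the product cocycle Γ̃ generated by γ̃ satisfies ‖Γ̃^m‖ ≤ C̃₀ ξ̃^m for all m ≥ 0. -/

import Mathlib

/-- The rotation of the torus `T^d = (ℝ/ℤ)^d` by the vector `ω ∈ ℝ^d`. -/
noncomputable def torusRot (d : ℕ) (ω : Fin d → ℝ) : Fin d → AddCircle (1 : ℝ) :=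
  fun i => (ω i : AddCircle (1 : ℝ))

private lemma cocycle_prop {d n : ℕ} (ω : Fin d → ℝ)
    (γ' : (Fin d → AddCircle (1 : ℝ)) → ((Fin n → ℝ) →L[ℝ] (Fin n → ℝ)))
    (Γ' : ℕ → (Fin d → AddCircle (1 : ℝ)) → ((Fin n → ℝ) →L[ℝ] (Fin n → ℝ)))
    (h0 : ∀ θ, Γ' 0 θ = ContinuousLinearMap.id ℝ (Fin n → ℝ))
    (hS : ∀ j θ, Γ' (j + 1) θ = (γ' (θ + j • torusRot d ω)).comp (Γ' j θ)) :
    ∀ k m θ, Γ' (m + k) θ = (Γ' k (θ + m • torusRot d ω)).comp (Γ' m θ) := by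
  intro k
  induction k with
  | zero => intro m θ; simp [h0]
  | succ k ih =>
    intro m θ
    rw [← Nat.add_assoc, hS, hS, ih, ContinuousLinearMap.comp_assoc]
    congr 2
    rw [add_nsmul, ← add_assoc]

set_option maxHeartbeats 2000000 in
/-- Persistence of exponential rates under perturbation of the cocycle: if the products
of `γ` satisfy `‖Γ^m‖ ≤ C₀ ξ^m` with `ξ < 1`, then there is `ε* > 0` (depending only on
`C₀`, `ξ` and the sup-norm of `γ`) so that any cocycle `γ̃` with `‖γ - γ̃‖ ≤ ε*` has
products satisfying `‖Γ̃^m‖ ≤ C̃₀ ξ̃^m` for some constants `C̃₀` and `ξ̃ < 1`. -/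
theorem rate_persistence_under_perturbation
    {d n : ℕ} (ω : Fin d → ℝ)
    (γ : (Fin d → AddCircle (1 : ℝ)) → ((Fin n → ℝ) →L[ℝ] (Fin n → ℝ)))
    (Γ : ℕ → (Fin d → AddCircle (1 : ℝ)) → ((Fin n → ℝ) →L[ℝ] (Fin n → ℝ)))
    (C₀ ξ Mγ : ℝ) (hC₀ : 1 ≤ C₀) (hξ0 : 0 < ξ) (hξ1 : ξ < 1)
    (h0 : ∀ θ, Γ 0 θ = ContinuousLinearMap.id ℝ (Fin n → ℝ))
    (hS : ∀ j θ, Γ (j + 1) θ = (γ (θ + j • torusRot d ω)).comp (Γ j θ))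
    (hΓ : ∀ m θ, ‖Γ m θ‖ ≤ C₀ * ξ ^ m)
    (hγb : ∀ θ, ‖γ θ‖ ≤ Mγ) :
    ∃ εs : ℝ, 0 < εs ∧
      ∀ (γ' : (Fin d → AddCircle (1 : ℝ)) → ((Fin n → ℝ) →L[ℝ] (Fin n → ℝ)))
        (Γ' : ℕ → (Fin d → AddCircle (1 : ℝ)) → ((Fin n → ℝ) →L[ℝ] (Fin n → ℝ))),
        (∀ θ, Γ' 0 θ = ContinuousLinearMap.id ℝ (Fin n → ℝ)) →
        (∀ j θ, Γ' (j + 1) θ = (γ' (θ + j • torusRot d ω)).comp (Γ' j θ)) →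
        (∀ θ, ‖γ θ - γ' θ‖ ≤ εs) →
        ∃ C' ξ' : ℝ, 0 < ξ' ∧ ξ' < 1 ∧ ∀ m θ, ‖Γ' m θ‖ ≤ C' * ξ' ^ m := by
  -- choose N with C₀ * ξ^N ≤ 1/4
  have hC₀pos : (0:ℝ) < C₀ := lt_of_lt_of_le one_pos hC₀
  obtain ⟨N₀, hN₀⟩ := exists_pow_lt_of_lt_one (show (0:ℝ) < 1 / (4 * C₀) by positivity) hξ1
  set N : ℕ := max N₀ 1 with hNdef
  have hN1 : 1 ≤ N := le_max_right _ _
  have hNpos : (0:ℝ) < (N:ℝ) := by exact_mod_cast hN1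
  have hξN : C₀ * ξ ^ N ≤ 1 / 4 := by
    have h1 : ξ ^ N ≤ ξ ^ N₀ :=
      pow_le_pow_of_le_one hξ0.le hξ1.le (le_max_left _ _)
    have h2 : C₀ * ξ ^ N₀ < C₀ * (1 / (4 * C₀)) :=
      (mul_lt_mul_iff_right₀ hC₀pos).2 hN₀
    have h3 : C₀ * (1 / (4 * C₀)) = 1 / 4 := by field_simp
    nlinarith [pow_nonneg hξ0.le N]
  -- Mγ ≥ 0, B := Mγ + 2
  have hMγ : 0 ≤ Mγ := le_trans (norm_nonneg _) (hγb 0)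
  set B : ℝ := Mγ + 2 with hBdef
  have hB1 : (1:ℝ) ≤ B := by linarith
  have hB0 : (0:ℝ) < B := by linarith
  have hBN0 : (0:ℝ) < B ^ N := pow_pos hB0 N
  refine ⟨min 1 (1 / (4 * N * B ^ N)), lt_min one_pos (by positivity), ?_⟩
  set εs : ℝ := min 1 (1 / (4 * N * B ^ N)) with hεdef
  have hεs0 : 0 < εs := lt_min one_pos (by positivity)
  have hεs1 : εs ≤ 1 := min_le_left _ _
  have hεs2 : εs ≤ 1 / (4 * N * B ^ N) := min_le_right _ _
  intro γ' Γ' h0' hS' hclose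
  -- basic norm bounds
  have hγB : ∀ θ, ‖γ θ‖ ≤ B := fun θ => le_trans (hγb θ) (by linarith)
  have hγ'B : ∀ θ, ‖γ' θ‖ ≤ B := by
    intro θ
    have he : γ' θ = γ θ - (γ θ - γ' θ) := by abel
    have := hclose θ
    have := hγb θ
    calc ‖γ' θ‖ = ‖γ θ - (γ θ - γ' θ)‖ := by rw [← he]
      _ ≤ ‖γ θ‖ + ‖γ θ - γ' θ‖ := norm_sub_le _ _
      _ ≤ B := by simp only [hBdef]; linarith
  have hΓB : ∀ m θ, ‖Γ m θ‖ ≤ B ^ m := by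
    intro m
    induction m with
    | zero => intro θ; rw [h0]; simpa using ContinuousLinearMap.norm_id_le
    | succ j ih =>
      intro θ
      rw [hS]
      calc ‖(γ (θ + j • torusRot d ω)).comp (Γ j θ)‖
          ≤ ‖γ (θ + j • torusRot d ω)‖ * ‖Γ j θ‖ := ContinuousLinearMap.opNorm_comp_le _ _
        _ ≤ B * B ^ j := mul_le_mul (hγB _) (ih θ) (norm_nonneg _) hB0.le
        _ = B ^ (j + 1) := by ring
  have hΓ'B : ∀ m θ, ‖Γ' m θ‖ ≤ B ^ m := by
    intro m
    induction m with
    | zero => intro θ; rw [h0']; simpa using ContinuousLinearMap.norm_id_le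
    | succ j ih =>
      intro θ
      rw [hS']
      calc ‖(γ' (θ + j • torusRot d ω)).comp (Γ' j θ)‖
          ≤ ‖γ' (θ + j • torusRot d ω)‖ * ‖Γ' j θ‖ := ContinuousLinearMap.opNorm_comp_le _ _
        _ ≤ B * B ^ j := mul_le_mul (hγ'B _) (ih θ) (norm_nonneg _) hB0.le
        _ = B ^ (j + 1) := by ring
  -- difference bound
  have hdiff : ∀ m θ, ‖Γ m θ - Γ' m θ‖ ≤ m * εs * B ^ m := by
    intro m
    induction m with
    | zero => intro θ; simp [h0, h0']
    | succ j ih =>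
      intro θ
      rw [hS, hS']
      set θj := θ + j • torusRot d ω
      have key : (γ θj).comp (Γ j θ) - (γ' θj).comp (Γ' j θ)
          = ((γ θj - γ' θj)).comp (Γ j θ) + (γ' θj).comp (Γ j θ - Γ' j θ) := by
        simp only [ContinuousLinearMap.sub_comp, ContinuousLinearMap.comp_sub]
        abel
      rw [key]
      have h1 : ‖((γ θj - γ' θj)).comp (Γ j θ)‖ ≤ εs * B ^ j :=
        le_trans (ContinuousLinearMap.opNorm_comp_le _ _)
          (mul_le_mul (hclose _) (hΓB j θ) (norm_nonneg _) hεs0.le)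
      have h2 : ‖(γ' θj).comp (Γ j θ - Γ' j θ)‖ ≤ B * (j * εs * B ^ j) :=
        le_trans (ContinuousLinearMap.opNorm_comp_le _ _)
          (mul_le_mul (hγ'B _) (ih θ) (norm_nonneg _) hB0.le)
      calc ‖((γ θj - γ' θj)).comp (Γ j θ) + (γ' θj).comp (Γ j θ - Γ' j θ)‖
          ≤ ‖((γ θj - γ' θj)).comp (Γ j θ)‖ + ‖(γ' θj).comp (Γ j θ - Γ' j θ)‖ := norm_add_le _ _
        _ ≤ εs * B ^ j + B * (j * εs * B ^ j) := add_le_add h1 h2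
        _ ≤ (↑(j + 1) : ℝ) * εs * B ^ (j + 1) := by
            have hBj : (0:ℝ) < B ^ j := pow_pos hB0 j
            have hj0 : (0:ℝ) ≤ (j:ℝ) := Nat.cast_nonneg j
            have h3 : εs * B ^ j ≤ εs * B ^ j * B := by
              nlinarith [mul_nonneg (mul_nonneg hεs0.le hBj.le) (sub_nonneg.2 hB1)]
            push_cast
            rw [pow_succ]
            nlinarith [h3]
  -- contraction after N steps
  have hΓ'N : ∀ θ, ‖Γ' N θ‖ ≤ 1 / 2 := by
    intro θ
    have h1 : ‖Γ' N θ‖ ≤ ‖Γ N θ‖ + ‖Γ N θ - Γ' N θ‖ := by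
      have he : Γ' N θ = Γ N θ - (Γ N θ - Γ' N θ) := by abel
      calc ‖Γ' N θ‖ = ‖Γ N θ - (Γ N θ - Γ' N θ)‖ := by rw [← he]
        _ ≤ ‖Γ N θ‖ + ‖Γ N θ - Γ' N θ‖ := norm_sub_le _ _
    have h2 : (N:ℝ) * εs * B ^ N ≤ 1 / 4 := by
      calc (N:ℝ) * εs * B ^ N ≤ (N:ℝ) * (1 / (4 * N * B ^ N)) * B ^ N := by
            apply mul_le_mul_of_nonneg_right _ hBN0.le
            exact mul_le_mul_of_nonneg_left hεs2 hNpos.le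
        _ = 1 / 4 := by field_simp
    have := hΓ N θ
    have := hdiff N θ
    linarith
  -- cocycle property for Γ'
  have hcoc := cocycle_prop ω γ' Γ' h0' hS'
  -- main estimate : ‖Γ' (N*k + ℓ)‖ ≤ (1/2)^k * B^ℓ
  have hmain : ∀ k ℓ θ, ‖Γ' (N * k + ℓ) θ‖ ≤ (1/2) ^ k * B ^ ℓ := by
    intro k
    induction k with
    | zero => intro ℓ θ; simpa using hΓ'B ℓ θ
    | succ k ih =>
      intro ℓ θ
      have hm : N * (k + 1) + ℓ = N + (N * k + ℓ) := by ring
      rw [hm, hcoc]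
      calc ‖(Γ' (N * k + ℓ) (θ + N • torusRot d ω)).comp (Γ' N θ)‖
          ≤ ‖Γ' (N * k + ℓ) (θ + N • torusRot d ω)‖ * ‖Γ' N θ‖ :=
            ContinuousLinearMap.opNorm_comp_le _ _
        _ ≤ ((1/2) ^ k * B ^ ℓ) * (1/2) := by
            apply mul_le_mul (ih _ _) (hΓ'N θ) (norm_nonneg _)
            positivity
        _ = (1/2) ^ (k + 1) * B ^ ℓ := by ring
  -- conclusion
  refine ⟨2 * B ^ N, ((1:ℝ)/2) ^ ((N:ℝ)⁻¹), Real.rpow_pos_of_pos (by norm_num) _,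
    Real.rpow_lt_one (by norm_num) (by norm_num) (by positivity), ?_⟩
  intro m θ
  set k := m / N with hk
  set ℓ := m % N with hl
  have hmkl : N * k + ℓ = m := Nat.div_add_mod m N
  have hℓN : ℓ < N := Nat.mod_lt _ hN1
  have step1 : ‖Γ' m θ‖ ≤ (1/2) ^ k * B ^ N := by
    rw [← hmkl]
    exact le_trans (hmain k ℓ θ)
      (mul_le_mul_of_nonneg_left (pow_le_pow_right₀ hB1 hℓN.le) (by positivity))
  -- (1/2)^k ≤ 2 * ξ'^m
  have hexp : (((1:ℝ)/2) ^ ((N:ℝ)⁻¹)) ^ m = ((1:ℝ)/2) ^ ((N:ℝ)⁻¹ * m) := by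
    rw [← Real.rpow_natCast (((1:ℝ)/2) ^ ((N:ℝ)⁻¹)) m, ← Real.rpow_mul (by norm_num)]
  have hle : (N:ℝ)⁻¹ * m ≤ (k:ℝ) + 1 := by
    have hm' : (m:ℝ) ≤ (N:ℝ) * ((k:ℝ) + 1) := by
      have : m ≤ N * (k + 1) := by
        rw [← hmkl, Nat.mul_add, Nat.mul_one]
        exact Nat.add_le_add_left hℓN.le _
      exact_mod_cast this
    rw [inv_mul_le_iff₀ hNpos]
    linarith
  have hmono : ((1:ℝ)/2) ^ ((k:ℝ) + 1) ≤ ((1:ℝ)/2) ^ ((N:ℝ)⁻¹ * m) :=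
    Real.rpow_le_rpow_of_exponent_ge (by norm_num) (by norm_num) hle
  have hcast : ((1:ℝ)/2) ^ ((k:ℝ) + 1) = ((1:ℝ)/2) ^ (k + 1 : ℕ) := by
    rw [← Real.rpow_natCast ((1:ℝ)/2) (k+1)]
    push_cast
    ring_nf
  have hfin : (1/2:ℝ) ^ k ≤ 2 * (((1:ℝ)/2) ^ ((N:ℝ)⁻¹)) ^ m := by
    rw [hexp]
    have : (1/2:ℝ) ^ k = 2 * ((1:ℝ)/2) ^ (k + 1 : ℕ) := by ring
    rw [this, ← hcast]
    linarith
  calc ‖Γ' m θ‖ ≤ (1/2) ^ k * B ^ N := step1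
    _ ≤ (2 * (((1:ℝ)/2) ^ ((N:ℝ)⁻¹)) ^ m) * B ^ N :=
        mul_le_mul_of_nonneg_right hfin hBN0.le
    _ = 2 * B ^ N * (((1:ℝ)/2) ^ ((N:ℝ)⁻¹)) ^ m := by ring
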